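/- Let x, x* ∈ ℝ^d, γ > 0, ω ∈ (0,1) and σ ∈ ℝ. Let G : Ω → ℝ^d be a measurable map with E[‖G‖²] < ∞. If E[‖(x - γ·G) - x*‖²] ≤ ω‖x - x*‖² + γ²σ², then E[‖G‖²] ≤ (1/(1-ω))‖E[G]‖² + σ². (One-step form of Theorem 1(i): x is the current iterate, G the stochastic gradient mapping 𝒢(x_t, ξ_t), and x - γG the next iterate.) -/

import Mathlib

open MeasureTheory

/-- One-step form of Theorem 1(i): if one stochastic-gradient step contracts
the expected squared distance up to `γ²σ²`, then the second moment of the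
stochastic gradient mapping satisfies the (weak) growth-type inequality. -/
theorem stmt_0 {d : ℕ} {Ω : Type*} [MeasurableSpace Ω] (P : Measure Ω)
    [IsProbabilityMeasure P] (x xstar : EuclideanSpace ℝ (Fin d))
    (γ ω σ : ℝ) (hγ : 0 < γ) (hω : ω ∈ Set.Ioo (0 : ℝ) 1)
    (G : Ω → EuclideanSpace ℝ (Fin d)) (hGmeas : Measurable G)
    (hGL2 : Integrable (fun a => ‖G a‖ ^ 2) P)
    (hstep : ∫ a, ‖x - γ • G a - xstar‖ ^ 2 ∂P ≤ ω * ‖x - xstar‖ ^ 2 + γ ^ 2 * σ ^ 2) :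
    ∫ a, ‖G a‖ ^ 2 ∂P ≤ (1 / (1 - ω)) * ‖∫ a, G a ∂P‖ ^ 2 + σ ^ 2 := by
  obtain ⟨hω0, hω1⟩ := hω
  set v := x - xstar with hv
  -- G is integrable
  have hGint : Integrable G P := by
    refine Integrable.mono' ((integrable_const (1 : ℝ)).add hGL2)
      hGmeas.aestronglyMeasurable (Filter.Eventually.of_forall fun a => ?_)
    have : ‖G a‖ ≤ 1 + ‖G a‖ ^ 2 := by nlinarith [norm_nonneg (G a), sq_nonneg (‖G a‖ - 1)]
    simpa using this
  have hinner_int : Integrable (fun a => (inner ℝ v (G a) : ℝ)) P := hGint.const_inner v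
  -- pointwise expansion
  have hexp : ∀ a, ‖x - γ • G a - xstar‖ ^ 2
      = ‖v‖ ^ 2 - 2 * γ * (inner ℝ v (G a) : ℝ) + γ ^ 2 * ‖G a‖ ^ 2 := by
    intro a
    have h1 : x - γ • G a - xstar = v - γ • G a := by rw [hv]; abel
    rw [h1, @norm_sub_sq_real, real_inner_smul_right, norm_smul]
    rw [Real.norm_eq_abs]
    rcases abs_nonneg γ with _
    have : |γ| = γ := abs_of_pos hγ
    rw [this]; ring
  have hi1 : Integrable (fun a => ‖v‖ ^ 2 - 2 * γ * (inner ℝ v (G a) : ℝ)) P :=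
    (integrable_const _).sub (hinner_int.const_mul _)
  have hi2 : Integrable (fun a => γ ^ 2 * ‖G a‖ ^ 2) P := hGL2.const_mul _
  have hIeq : ∫ a, ‖x - γ • G a - xstar‖ ^ 2 ∂P
      = ‖v‖ ^ 2 - 2 * γ * (inner ℝ v (∫ a, G a ∂P) : ℝ) + γ ^ 2 * ∫ a, ‖G a‖ ^ 2 ∂P := by
    have h1 : (fun a => ‖x - γ • G a - xstar‖ ^ 2)
        = fun a => (‖v‖ ^ 2 - 2 * γ * (inner ℝ v (G a) : ℝ)) + γ ^ 2 * ‖G a‖ ^ 2 := by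
      funext a; rw [hexp a]
    rw [h1, integral_add hi1 hi2, integral_sub (integrable_const _) (hinner_int.const_mul _),
      integral_const, integral_const_mul, integral_const_mul]
    have : ∫ a, (inner ℝ v (G a) : ℝ) ∂P = (inner ℝ v (∫ a, G a ∂P) : ℝ) :=
      integral_inner hGint v
    rw [this]
    simp [measure_univ]
  rw [hIeq] at hstep
  set A := ∫ a, ‖G a‖ ^ 2 ∂P
  set m := ∫ a, G a ∂P
  have hb : (inner ℝ v m : ℝ) ≤ ‖v‖ * ‖m‖ := real_inner_le_norm v m
  have h1ω : 0 < 1 - ω := by linarith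
  have hγ2 : 0 < γ ^ 2 := by positivity
  have hkey : γ ^ 2 * ((1 - ω) * A) ≤ γ ^ 2 * (‖m‖ ^ 2 + (1 - ω) * σ ^ 2) := by
    nlinarith [sq_nonneg ((1 - ω) * ‖v‖ - γ * ‖m‖),
      mul_le_mul_of_nonneg_left hstep h1ω.le,
      mul_le_mul_of_nonneg_left hb (by positivity : (0:ℝ) ≤ 2 * γ * (1 - ω))]
  have h2 : (1 - ω) * A ≤ ‖m‖ ^ 2 + (1 - ω) * σ ^ 2 := (mul_le_mul_iff_right₀ hγ2).mp hkey
  have h3 : A - σ ^ 2 ≤ ‖m‖ ^ 2 / (1 - ω) := by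
    rw [le_div_iff₀ h1ω]; nlinarith
  have : (1 / (1 - ω)) * ‖m‖ ^ 2 = ‖m‖ ^ 2 / (1 - ω) := by ring
  rw [this]
  linarith
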